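/- For any s ≥ 0, the product of binomial coefficients ∏_{r=0}^{s-1} C(2(2^r) + 2(2^{r+1} - 1), 2(2^r)) taken along the partial sums 1, 1+2, 1+2+4, ..., is odd; equivalently, the iterated product δ_1 δ_2 δ_{2^2} ⋯ δ_{2^s} equals an odd integer multiple of δ_{2^{s+1}-1} in the ring where δ_i δ_j = C(2i+2j, 2i) δ_{i+j}. -/

import Mathlib

private lemma choose_two_pow_sub_one_odd : ∀ m k : ℕ, k ≤ 2 ^ m - 1 →
    Odd ((2 ^ m - 1).choose k) := by
  intro m
  induction m with
  | zero => intro k hk; interval_cases k; simp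
  | succ m ih =>
    intro k hk
    haveI : Fact (Nat.Prime 2) := ⟨Nat.prime_two⟩
    have h := Choose.choose_modEq_choose_mod_mul_choose_div_nat
      (p := 2) (n := 2 ^ (m + 1) - 1) (k := k)
    have hpos : 0 < 2 ^ m := Nat.pow_pos (by norm_num)
    have hmod : (2 ^ (m + 1) - 1) % 2 = 1 := by
      have : 2 ^ (m + 1) = 2 * 2 ^ m := by ring
      omega
    have hdiv : (2 ^ (m + 1) - 1) / 2 = 2 ^ m - 1 := by
      have : 2 ^ (m + 1) = 2 * 2 ^ m := by ring
      omega
    rw [hmod, hdiv] at h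
    have h1 : Nat.choose 1 (k % 2) = 1 := by
      have : k % 2 ≤ 1 := by omega
      interval_cases (k % 2) <;> simp
    rw [h1, one_mul] at h
    have hkd : k / 2 ≤ 2 ^ m - 1 := by
      have : 2 ^ (m + 1) = 2 * 2 ^ m := by ring
      omega
    have hodd := ih (k / 2) hkd
    rw [Nat.odd_iff] at hodd ⊢
    unfold Nat.ModEq at h
    omega

private lemma key_odd (r : ℕ) :
    Odd ((2 * (2 ^ r - 1) + 2 * 2 ^ r).choose (2 * (2 ^ r - 1))) := by
  haveI : Fact (Nat.Prime 2) := ⟨Nat.prime_two⟩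
  have hpos : 0 < 2 ^ r := Nat.pow_pos (by norm_num)
  have h := Choose.choose_modEq_choose_mod_mul_choose_div_nat
    (p := 2) (n := 2 * (2 ^ r - 1) + 2 * 2 ^ r) (k := 2 * (2 ^ r - 1))
  have hnmod : (2 * (2 ^ r - 1) + 2 * 2 ^ r) % 2 = 0 := by omega
  have hkmod : (2 * (2 ^ r - 1)) % 2 = 0 := by omega
  have hndiv : (2 * (2 ^ r - 1) + 2 * 2 ^ r) / 2 = 2 ^ (r + 1) - 1 := by
    have : 2 ^ (r + 1) = 2 * 2 ^ r := by ring
    omega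
  have hkdiv : (2 * (2 ^ r - 1)) / 2 = 2 ^ r - 1 := by omega
  rw [hnmod, hkmod, hndiv, hkdiv] at h
  have hle : 2 ^ r - 1 ≤ 2 ^ (r + 1) - 1 := by
    have : 2 ^ (r + 1) = 2 * 2 ^ r := by ring
    omega
  have hodd := choose_two_pow_sub_one_odd (r + 1) (2 ^ r - 1) hle
  rw [Nat.odd_iff] at hodd ⊢
  simp only [Nat.choose_zero_right, one_mul] at h
  unfold Nat.ModEq at h
  omega

private lemma key_odd' (r : ℕ) :
    Odd ((2 * (2 ^ r - 1) + 2 * 2 ^ r).choose (2 * 2 ^ r)) := by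
  have hpos : 0 < 2 ^ r := Nat.pow_pos (by norm_num)
  have h2 : (2 * (2 ^ r - 1) + 2 * 2 ^ r).choose (2 * 2 ^ r)
      = (2 * (2 ^ r - 1) + 2 * 2 ^ r).choose (2 * (2 ^ r - 1)) := by
    rw [← Nat.choose_symm (show 2 * 2 ^ r ≤ 2 * (2 ^ r - 1) + 2 * 2 ^ r by omega)]
    congr 1
    omega
  rw [h2]
  exact key_odd r

theorem delta_product_odd_multiple (s : ℕ) :
    Odd (∏ r ∈ Finset.Icc 1 s, (2 * (2 ^ r - 1) + 2 * 2 ^ r).choose (2 * 2 ^ r)) ∧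
    ∀ (R : Type) [CommRing R] (δ : ℕ → R),
      (∀ i j : ℕ, δ i * δ j = ((2 * i + 2 * j).choose (2 * i)) • δ (i + j)) →
      ∃ c : ℕ, Odd c ∧ ∏ r ∈ Finset.range (s + 1), δ (2 ^ r) = c • δ (2 ^ (s + 1) - 1) := by
  constructor
  · apply Finset.prod_induction _ Odd (fun a b ha hb => ha.mul hb) odd_one
    intro r _
    exact key_odd' r
  · intro R _ δ hδ
    induction s with
    | zero =>
      refine ⟨1, odd_one, ?_⟩
      simp
    | succ s ih =>
      obtain ⟨c, hc, heq⟩ := ih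
      rw [Finset.prod_range_succ, heq]
      have hpos : 0 < 2 ^ (s + 1) := Nat.pow_pos (by norm_num)
      have hmul := hδ (2 ^ (s + 1) - 1) (2 ^ (s + 1))
      have hsum : 2 ^ (s + 1) - 1 + 2 ^ (s + 1) = 2 ^ (s + 2) - 1 := by
        have : 2 ^ (s + 2) = 2 * 2 ^ (s + 1) := by ring
        omega
      rw [hsum] at hmul
      refine ⟨c * (2 * (2 ^ (s + 1) - 1) + 2 * 2 ^ (s + 1)).choose (2 * (2 ^ (s + 1) - 1)),
        hc.mul (key_odd (s + 1)), ?_⟩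
      rw [smul_mul_assoc, hmul, mul_smul]
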